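/- Let λ : (-∞, 0] → (0, ∞) be C² with λ'' = η/(4λ) for some η > 0, λ(0) = sin ε, λ'(0) = cos ε, and suppose 0 < λ'(t) ≤ cos ε for all t < 0. Then it cannot happen that λ(t) → 0 as t ↓ -K for a finite K; more precisely, if λ' > 0 on (-K, 0] then ∫_{-K}^0 dt/(4λ(t)) ≤ cos ε, and via the substitution τ = λ(t) this forces inf_{(-K,0]} λ > 0. -/

import Mathlib

/-- let `λ : (-∞,0] → (0,∞)` be C² with `λ'' = η/(4λ)` (`η > 0`),
`λ(0) = sin ε`, `λ'(0) = cos ε`, and `0 < λ' ≤ cos ε` on `(-K, 0]`.  Then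
`∫_{-K}^0 η dt/(4λ(t)) ≤ cos ε`, and (via the substitution `τ = λ(t)`) this
forces `inf_{(-K,0]} λ > 0`: `λ` cannot tend to `0` at `-K`. -/
theorem neck_ode_integral_bound
    (η ε K : ℝ) (hη : 0 < η) (hε : 0 < ε) (hε' : ε < Real.pi / 2) (hK : 0 < K)
    (lam : ℝ → ℝ) (hsm : ContDiff ℝ 2 lam)
    (h0 : lam 0 = Real.sin ε) (h0' : deriv lam 0 = Real.cos ε)
    (hpos : ∀ t ∈ Set.Ioc (-K) 0, 0 < lam t)
    (hd : ∀ t ∈ Set.Ioc (-K) 0, 0 < deriv lam t ∧ deriv lam t ≤ Real.cos ε)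
    (hode : ∀ t ∈ Set.Ioc (-K) 0, deriv (deriv lam) t = η / (4 * lam t)) :
    (∫ t in (-K)..0, η / (4 * lam t)) ≤ Real.cos ε ∧
    ∃ c > 0, ∀ t ∈ Set.Ioc (-K) 0, c ≤ lam t := by
  have hcos : 0 < Real.cos ε :=
    Real.cos_pos_of_mem_Ioo ⟨by linarith [Real.pi_pos], hε'⟩
  have hdiff : Differentiable ℝ lam := hsm.differentiable (by norm_num)
  have h11 : ContDiff ℝ ((1 : WithTop ℕ∞) + 1) lam := by
    rw [show ((1 : WithTop ℕ∞) + 1) = 2 by norm_num]; exact_mod_cast hsm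
  have h1 : ContDiff ℝ 1 (deriv lam) := (contDiff_succ_iff_deriv.mp h11).2.2
  have hdd : Differentiable ℝ (deriv lam) := h1.differentiable (by norm_num)
  have hcont2 : Continuous (deriv (deriv lam)) := h1.continuous_deriv le_rfl
  have hKlt : (-K : ℝ) < 0 := by linarith
  -- limits at -K
  have hmemnhd : Set.Ioo (-K) 0 ∈ nhdsWithin (-K) (Set.Ioi (-K)) :=
    Ioo_mem_nhdsGT_of_mem ⟨le_rfl, hKlt⟩
  have htendd : Filter.Tendsto (deriv lam) (nhdsWithin (-K) (Set.Ioi (-K)))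
      (nhds (deriv lam (-K))) := (hdd.continuous.continuousAt).continuousWithinAt
  have hA0 : 0 ≤ deriv lam (-K) := by
    refine ge_of_tendsto htendd ?_
    filter_upwards [hmemnhd] with t ht
    exact (hd t ⟨ht.1, ht.2.le⟩).1.le
  have hA1 : deriv lam (-K) ≤ Real.cos ε := by
    refine le_of_tendsto htendd ?_
    filter_upwards [hmemnhd] with t ht
    exact (hd t ⟨ht.1, ht.2.le⟩).2
  -- Part 1
  have hInt : IntervalIntegrable (deriv (deriv lam)) MeasureTheory.volume (-K) 0 :=
    hcont2.intervalIntegrable _ _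
  have hFTC : ∫ t in (-K)..0, deriv (deriv lam) t = deriv lam 0 - deriv lam (-K) :=
    intervalIntegral.integral_deriv_eq_sub (fun x _ => hdd x) hInt
  have hcongr : (∫ t in (-K)..0, η / (4 * lam t)) = ∫ t in (-K)..0, deriv (deriv lam) t := by
    refine intervalIntegral.integral_congr_ae (Filter.Eventually.of_forall fun x hx => ?_)
    rw [Set.uIoc_of_le hKlt.le] at hx
    exact (hode x hx).symm
  constructor
  · rw [hcongr, hFTC, h0']; linarith
  -- Part 2
  by_cases hlK : 0 < lam (-K)
  · refine ⟨lam (-K), hlK, fun t ht => ?_⟩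
    have hmono : StrictMonoOn lam (Set.Icc (-K) 0) :=
      strictMonoOn_of_deriv_pos (convex_Icc _ _) hdiff.continuous.continuousOn
        (fun x hx => by
          rw [interior_Icc] at hx
          exact (hd x ⟨hx.1, hx.2.le⟩).1)
    exact (hmono ⟨le_rfl, hKlt.le⟩ ⟨ht.1.le, ht.2⟩ ht.1).le
  · push_neg at hlK
    exfalso
    set c := η / (4 * Real.cos ε) with hcdef
    have hc : 0 < c := by positivity
    -- derivative bound on the closed interval
    have hdbnd : ∀ x ∈ Set.Icc (-K) 0, ‖deriv lam x‖ ≤ Real.cos ε := by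
      intro x hx
      rcases eq_or_lt_of_le hx.1 with heq | hlt
      · rw [← heq, Real.norm_eq_abs, abs_le]; exact ⟨by linarith, hA1⟩
      · have := hd x ⟨hlt, hx.2⟩
        rw [Real.norm_eq_abs, abs_le]
        exact ⟨by linarith [this.1], this.2⟩
    have hbound : ∀ t ∈ Set.Ioc (-K) 0, lam t ≤ Real.cos ε * (t + K) := by
      intro t ht
      have hmvt := Convex.norm_image_sub_le_of_norm_deriv_le (f := lam)
        (s := Set.Icc (-K) 0) (fun x _ => hdiff x) hdbnd (convex_Icc _ _)
        (Set.mem_Icc.mpr ⟨le_rfl, hKlt.le⟩) ⟨ht.1.le, ht.2⟩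
      have h1 : lam t - lam (-K) ≤ Real.cos ε * (t + K) := by
        have h2 : ‖t - (-K)‖ = t + K := by
          rw [Real.norm_eq_abs, abs_of_pos (by linarith [ht.1])]; ring
        calc lam t - lam (-K) ≤ ‖lam t - lam (-K)‖ := le_abs_self _
          _ ≤ Real.cos ε * ‖t - (-K)‖ := hmvt
          _ = Real.cos ε * (t + K) := by rw [h2]
      linarith
    have hdd_low : ∀ t ∈ Set.Ioc (-K) 0, c / (t + K) ≤ deriv (deriv lam) t := by
      intro t ht
      rw [hode t ht]
      have h1 : 0 < lam t := hpos t ht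
      have h2 : lam t ≤ Real.cos ε * (t + K) := hbound t ht
      have htK : 0 < t + K := by linarith [ht.1]
      have heq : c / (t + K) = η / (4 * (Real.cos ε * (t + K))) := by
        rw [hcdef, div_div]; ring_nf
      rw [heq]
      gcongr <;> linarith
    -- the contradiction point
    obtain ⟨s, hsdef⟩ : ∃ s : ℝ, s = -K + K * Real.exp (-(2 * Real.cos ε / c)) := ⟨_, rfl⟩
    have hexp1 : Real.exp (-(2 * Real.cos ε / c)) < 1 := by
      apply Real.exp_lt_one_iff.mpr
      have : 0 < 2 * Real.cos ε / c := by positivity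
      linarith
    have hexp0 : 0 < Real.exp (-(2 * Real.cos ε / c)) := Real.exp_pos _
    have hsK : -K < s := by
      have h := mul_pos hK hexp0; linarith [hsdef]
    have hs0 : s < 0 := by
      have h := mul_lt_of_lt_one_right hK hexp1; linarith [hsdef]
    have hFTC2 : ∫ t in s..0, deriv (deriv lam) t = deriv lam 0 - deriv lam s :=
      intervalIntegral.integral_deriv_eq_sub (fun x _ => hdd x)
        (hcont2.intervalIntegrable _ _)
    have hIntc : IntervalIntegrable (fun t => c / (t + K)) MeasureTheory.volume s 0 := by
      apply ContinuousOn.intervalIntegrable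
      apply ContinuousOn.div continuousOn_const (by fun_prop)
      intro x hx
      rw [Set.uIcc_of_le hs0.le] at hx
      have : -K < x := lt_of_lt_of_le hsK hx.1
      intro h; linarith
    have hlogint : ∫ t in s..0, c / (t + K) = c * Real.log K - c * Real.log (s + K) := by
      have hderiv : ∀ x ∈ Set.uIcc s 0,
          HasDerivAt (fun t => c * Real.log (t + K)) (c / (x + K)) x := by
        intro x hx
        rw [Set.uIcc_of_le hs0.le] at hx
        have hxK : 0 < x + K := by linarith [lt_of_lt_of_le hsK hx.1]
        have h := ((hasDerivAt_id x).add_const K).log (ne_of_gt hxK)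
        simpa [div_eq_mul_inv, mul_comm] using (h.const_mul c)
      rw [intervalIntegral.integral_eq_sub_of_hasDerivAt hderiv hIntc]
      simp
    have hmon : (∫ t in s..0, c / (t + K)) ≤ ∫ t in s..0, deriv (deriv lam) t := by
      apply intervalIntegral.integral_mono_on hs0.le hIntc (hcont2.intervalIntegrable _ _)
      intro x hx
      exact hdd_low x ⟨lt_of_lt_of_le hsK hx.1, hx.2⟩
    have hsKval : s + K = K * Real.exp (-(2 * Real.cos ε / c)) := by rw [hsdef]; ring
    have hlogval : Real.log (s + K) = Real.log K + (-(2 * Real.cos ε / c)) := by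
      rw [hsKval, Real.log_mul (ne_of_gt hK) (ne_of_gt hexp0), Real.log_exp]
    have hds : 0 < deriv lam s := (hd s ⟨hsK, hs0.le⟩).1
    have hval : (∫ t in s..0, c / (t + K)) = 2 * Real.cos ε := by
      rw [hlogint, hlogval]
      field_simp
      ring
    rw [hval, hFTC2, h0'] at hmon
    linarith
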